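/- Let X be a compact topological space, f : X → ℝ continuous and g : X → ℝ ∪ {+∞} proper lower semicontinuous. Suppose that for every x ∈ dom g, either f(x) < g(x), or there exists z ∈ dom g with (f(x)−f(z))⁺ < (g(x)−g(z))⁺. Then f(x) < g(x) for every x ∈ dom g. -/

import Mathlib

/-- A lower semicontinuous `EReal`-valued function on a nonempty compact space
attains its minimum. -/
lemma stmt8_aux_exists_min {X : Type*} [TopologicalSpace X] [CompactSpace X] [Nonempty X]
    (ψ : X → EReal) (h : LowerSemicontinuous ψ) : ∃ x, ∀ y, ψ x ≤ ψ y := by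
  set t : X → Set X := fun x => {y | ψ y ≤ ψ x} with ht
  have hmem : ∀ x y, y ∈ t x ↔ ψ y ≤ ψ x := fun x y => Iff.rfl
  have hcl : ∀ x, IsClosed (t x) := fun x => h.isClosed_preimage (ψ x)
  have hdir : Directed (· ⊇ ·) t := by
    intro x y
    rcases le_total (ψ x) (ψ y) with h' | h'
    · exact ⟨x, fun z hz => hz, fun z hz => (hmem y z).2 (le_trans ((hmem x z).1 hz) h')⟩
    · exact ⟨y, fun z hz => (hmem x z).2 (le_trans ((hmem y z).1 hz) h'), fun z hz => hz⟩
  have hne : ∀ x, (t x).Nonempty := fun x => ⟨x, (hmem x x).2 (le_refl _)⟩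
  have hcp : ∀ x, IsCompact (t x) := fun x => (hcl x).isCompact
  obtain ⟨x, hx⟩ :=
    IsCompact.nonempty_iInter_of_directed_nonempty_isCompact_isClosed t hdir hne hcp hcl
  exact ⟨x, fun y => (hmem y x).1 (Set.mem_iInter.1 hx y)⟩

/-- Strict comparison on a compact space, extended-valued case:
`f : X → ℝ` continuous, `g : X → ℝ ∪ {+∞}` proper lsc; if at every `x ∈ dom g`
either `f x < g x` or some `z ∈ dom g` gives strictly more positive descent to `g`
than to `f`, then `f < g` on `dom g`. -/
theorem stmt8 {X : Type*} [TopologicalSpace X] [CompactSpace X]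
    (f : X → ℝ) (g : X → EReal) (hf : Continuous f)
    (hgbot : ∀ x, g x ≠ ⊥) (hgproper : ∃ x, g x ≠ ⊤)
    (hg : LowerSemicontinuous g)
    (h : ∀ x, g x ≠ ⊤ → (f x : EReal) < g x ∨
      ∃ z, g z ≠ ⊤ ∧ max ((f x : EReal) - (f z : EReal)) 0 < max (g x - g z) 0) :
    ∀ x, g x ≠ ⊤ → (f x : EReal) < g x := by
  by_contra hc
  push_neg at hc
  obtain ⟨x₀, hx₀top, hx₀⟩ := hc
  have : Nonempty X := ⟨x₀⟩
  -- the lower semicontinuous function ψ = g - f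
  have hψlsc : LowerSemicontinuous (fun x => g x + ((-f x : ℝ) : EReal)) := by
    apply hg.add' ((continuous_coe_real_ereal.comp hf.neg).lowerSemicontinuous)
    intro x
    exact EReal.continuousAt_add (Or.inr (EReal.coe_ne_bot _)) (Or.inl (hgbot x))
  obtain ⟨w, hw⟩ := stmt8_aux_exists_min _ hψlsc
  -- ψ w ≤ ψ x₀ ≤ 0
  have hψx₀ : g x₀ + ((-f x₀ : ℝ) : EReal) ≤ 0 := by
    calc g x₀ + ((-f x₀ : ℝ) : EReal) ≤ (f x₀ : EReal) + ((-f x₀ : ℝ) : EReal) :=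
          add_le_add hx₀ le_rfl
      _ = ((f x₀ + -f x₀ : ℝ) : EReal) := (EReal.coe_add _ _).symm
      _ = 0 := by norm_num
  have hψw : g w + ((-f w : ℝ) : EReal) ≤ 0 := (hw x₀).trans hψx₀
  have hwtop : g w ≠ ⊤ := by
    intro htop
    rw [htop, EReal.top_add_coe] at hψw
    exact absurd hψw (by simp)
  obtain ⟨r, hr⟩ : ∃ r : ℝ, g w = (r : EReal) := by
    lift g w to ℝ using ⟨hwtop, hgbot w⟩ with r hr
    exact ⟨r, rfl⟩
  have hrw : r ≤ f w := by
    rw [hr, ← EReal.coe_add] at hψw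
    have : (r + -f w : ℝ) ≤ (0 : ℝ) := by exact_mod_cast hψw
    linarith
  rcases h w hwtop with hlt | ⟨z, hztop, hz⟩
  · rw [hr] at hlt
    exact absurd (EReal.coe_lt_coe_iff.1 hlt) (not_lt.2 hrw)
  · -- z gives a strictly better value of ψ, contradicting minimality of w
    obtain ⟨s, hs⟩ : ∃ s : ℝ, g z = (s : EReal) := by
      lift g z to ℝ using ⟨hztop, hgbot z⟩ with s hs
      exact ⟨s, rfl⟩
    rw [hr, hs] at hz
    have hz' : max (f w - f z) 0 < max (r - s) 0 := by
      have : ((max (f w - f z) 0 : ℝ) : EReal) < ((max (r - s) 0 : ℝ) : EReal) := by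
        rw [EReal.coe_strictMono.monotone.map_max, EReal.coe_strictMono.monotone.map_max,
          EReal.coe_sub, EReal.coe_sub, EReal.coe_zero]
        exact hz
      exact_mod_cast this
    have h1 : f w - f z < max (r - s) 0 := lt_of_le_of_lt (le_max_left _ _) hz'
    have h2 : (0 : ℝ) < max (r - s) 0 := lt_of_le_of_lt (le_max_right _ _) hz'
    have h3 : max (r - s) 0 = r - s := by
      rcases max_cases (r - s) (0 : ℝ) with ⟨he, _⟩ | ⟨he, _⟩
      · exact he
      · rw [he] at h2; linarith
    rw [h3] at h1
    -- hence ψ z < ψ w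
    have hlt2 : g z + ((-f z : ℝ) : EReal) < g w + ((-f w : ℝ) : EReal) := by
      rw [hr, hs, ← EReal.coe_add, ← EReal.coe_add]
      exact_mod_cast (by linarith : s + -f z < r + -f w)
    exact absurd (hw z) (not_le.2 hlt2)
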